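/- Let (d, r) be an arithmetical structure on the cycle C_n such that for each i, r_i divides the sum of the other entries ∑_{j≠i} r_j. Then the pair (d̃, r̃) defined by d̃_0 = 1, d̃_i = d_i + (r_1 + ... + r_n)/r_i for 1 ≤ i ≤ n, r̃_0 = r_1 + ... + r_n, and r̃_i = r_i for 1 ≤ i ≤ n, is an arithmetical structure on the wheel graph W_n. -/
import Mathlib


/-- Predecessor of cycle vertex `i` in the cycle `v_1, …, v_n`. -/
def cyclePrev (n i : ℕ) : ℕ := if i = 1 then n else i - 1

/-- Successor of cycle vertex `i` in the cycle `v_1, …, v_n`. -/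
def cycleNext (n i : ℕ) : ℕ := if i = n then 1 else i + 1

/-- `(d, r)` is an arithmetical structure on the wheel graph `W_n`, whose hub `v_0`
is indexed by `0` and whose cycle vertices `v_1, …, v_n` are indexed by `1, …, n`. -/
def IsWheelArithStructure (n : ℕ) (d r : ℕ → ℕ) : Prop :=
  (∀ i ≤ n, 0 < d i) ∧ (∀ i ≤ n, 0 < r i) ∧
  (Finset.range (n + 1)).gcd r = 1 ∧
  d 0 * r 0 = ∑ i ∈ Finset.Icc 1 n, r i ∧
  ∀ i, 1 ≤ i → i ≤ n → d i * r i = r 0 + r (cyclePrev n i) + r (cycleNext n i)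

/-- `(d, r)` is an arithmetical structure on the cycle `C_n` with vertices `v_1, …, v_n`. -/
def IsCycleArithStructure (n : ℕ) (d r : ℕ → ℕ) : Prop :=
  (∀ i, 1 ≤ i → i ≤ n → 0 < d i) ∧ (∀ i, 1 ≤ i → i ≤ n → 0 < r i) ∧
  (Finset.Icc 1 n).gcd r = 1 ∧
  ∀ i, 1 ≤ i → i ≤ n → d i * r i = r (cyclePrev n i) + r (cycleNext n i)

/-- From an arithmetical structure on `C_n` in which each `r i` divides the sum of the
other entries, one gets an arithmetical structure on the wheel `W_n` with hub values
`d̃ 0 = 1` and `r̃ 0 = r 1 + ⋯ + r n`. -/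
theorem wheel_structure_from_cycle_structure (n : ℕ) (hn : 3 ≤ n) (d r : ℕ → ℕ)
    (h : IsCycleArithStructure n d r)
    (hdvd : ∀ i, 1 ≤ i → i ≤ n → r i ∣ ∑ j ∈ (Finset.Icc 1 n).erase i, r j) :
    IsWheelArithStructure n
      (fun i => if i = 0 then 1 else d i + (∑ j ∈ Finset.Icc 1 n, r j) / r i)
      (fun i => if i = 0 then ∑ j ∈ Finset.Icc 1 n, r j else r i) := by
  obtain ⟨hd, hr, hgcd, heq⟩ := h
  set R := ∑ j ∈ Finset.Icc 1 n, r j with hR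
  have hRpos : 0 < R := by
    apply Finset.sum_pos (fun i hi => hr i (Finset.mem_Icc.mp hi).1 (Finset.mem_Icc.mp hi).2)
    exact ⟨1, Finset.mem_Icc.mpr ⟨le_refl 1, by omega⟩⟩
  have hdvdR : ∀ i, 1 ≤ i → i ≤ n → r i ∣ R := by
    intro i h1 h2
    have hmem : i ∈ Finset.Icc 1 n := Finset.mem_Icc.mpr ⟨h1, h2⟩
    have := Finset.sum_erase_add (Finset.Icc 1 n) r hmem
    rw [hR, ← this]
    exact Nat.dvd_add (hdvd i h1 h2) dvd_rfl
  refine ⟨?_, ?_, ?_, ?_, ?_⟩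
  · intro i hi
    by_cases h0 : i = 0
    · simp [h0]
    · simp only [h0, if_false]
      exact Nat.lt_of_lt_of_le (hd i (by omega) hi) (Nat.le_add_right _ _)
  · intro i hi
    by_cases h0 : i = 0
    · simpa [h0] using hRpos
    · simpa [h0] using hr i (by omega) hi
  · have hsub : Finset.Icc 1 n ⊆ Finset.range (n + 1) := by
      intro x hx
      simp only [Finset.mem_Icc] at hx
      exact Finset.mem_range.mpr (by omega)
    have hle := Finset.gcd_mono (f := fun i => if i = 0 then R else r i) hsub
    have heq2 : (Finset.Icc 1 n).gcd (fun i => if i = 0 then R else r i)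
        = (Finset.Icc 1 n).gcd r := by
      apply Finset.gcd_congr rfl
      intro x hx
      have : x ≠ 0 := by
        have := (Finset.mem_Icc.mp hx).1; omega
      simp [this]
    rw [heq2, hgcd] at hle
    exact Nat.dvd_one.mp hle
  · simp only [if_pos rfl, if_true, one_mul]
    apply Finset.sum_congr rfl
    intro x hx
    have : x ≠ 0 := by have := (Finset.mem_Icc.mp hx).1; omega
    simp [this]
  · intro i h1 h2
    have hi0 : i ≠ 0 := by omega
    have hprev0 : cyclePrev n i ≠ 0 := by unfold cyclePrev; split <;> omega
    have hnext0 : cycleNext n i ≠ 0 := by unfold cycleNext; split <;> omega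
    simp only [hi0, hprev0, hnext0, if_false, if_pos rfl]
    rw [Nat.add_mul, Nat.div_mul_cancel (hdvdR i h1 h2), heq i h1 h2]
    simp
    omega
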